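/- Let a, b, c be the sidelengths of an acute triangle. Then for any two points A, B ∈ ℝ³ with dist(A,B) = c, there exist points C, D ∈ ℝ³ with dist(C,D) = c, dist(A,C) = dist(B,D) = b, and dist(A,D) = dist(B,C) = a; that is, ABCD is a simplex all four of whose triangular faces are congruent to the triangle with sidelengths a, b, c (every such pair (A,B) has an extension). -/

import Mathlib

/-- Every pair of points at distance `c` in `ℝ³` has an extension: given an acute
triangle with sidelengths `a, b, c` and points `A, B` with `dist A B = c`, there exist
`C, D` such that `ABCD` is a simplex all four of whose faces are congruent to the
triangle. -/
theorem good_pair_has_extension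
    (a b c : ℝ) (ha : 0 < a) (hb : 0 < b) (hc : 0 < c)
    (hacute₁ : a ^ 2 < b ^ 2 + c ^ 2)
    (hacute₂ : b ^ 2 < a ^ 2 + c ^ 2)
    (hacute₃ : c ^ 2 < a ^ 2 + b ^ 2)
    (A B : EuclideanSpace ℝ (Fin 3)) (hAB : dist A B = c) :
    ∃ C D : EuclideanSpace ℝ (Fin 3),
      dist C D = c ∧ dist A C = b ∧ dist B D = b ∧ dist A D = a ∧ dist B C = a := by
  have hc0 : c ≠ 0 := hc.ne'
  set u : EuclideanSpace ℝ (Fin 3) := c⁻¹ • (B - A) with hu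
  have hnormu : ‖u‖ = 1 := by
    rw [hu, norm_smul, norm_inv, Real.norm_eq_abs, abs_of_pos hc, ← dist_eq_norm,
      dist_comm, hAB]
    field_simp
  -- extend `u` to an orthonormal basis
  have hcard : Module.finrank ℝ (EuclideanSpace ℝ (Fin 3)) = Fintype.card (Fin 3) := by
    simp [finrank_euclideanSpace_fin]
  have hOn : Orthonormal ℝ (({0} : Set (Fin 3)).restrict ![u, 0, 0]) := by
    rw [orthonormal_iff_ite]
    rintro ⟨i, hi⟩ ⟨j, hj⟩
    simp only [Set.mem_singleton_iff] at hi hj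
    subst hi; subst hj
    simp only [Set.restrict_apply, Matrix.cons_val_zero, if_pos rfl]
    rw [real_inner_self_eq_norm_mul_norm,
      show ({0} : Set (Fin 3)).restrict ![u, 0, 0] ⟨0, hi⟩ = u from rfl, hnormu]
    norm_num
  obtain ⟨bb, hbb⟩ := hOn.exists_orthonormalBasis_extension_of_card_eq hcard
  have hbb0 : bb 0 = u := by simpa using hbb 0 (by simp)
  -- points from coordinates
  set f := bb.repr.symm with hf
  set v3 : ℝ → ℝ → ℝ → EuclideanSpace ℝ (Fin 3) := fun p q r =>
    (p • EuclideanSpace.single 0 1 + q • EuclideanSpace.single 1 1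
      + r • EuclideanSpace.single 2 1 : EuclideanSpace ℝ (Fin 3)) with hv3
  set pt : ℝ → ℝ → ℝ → EuclideanSpace ℝ (Fin 3) := fun p q r => A + f (v3 p q r) with hpt
  have hv3apply : ∀ p q r : ℝ, ∀ i : Fin 3, v3 p q r i = ![p, q, r] i := by
    intro p q r i
    fin_cases i <;>
      simp [hv3, EuclideanSpace.single_apply]
  have hdist : ∀ p q r p' q' r' : ℝ,
      dist (pt p q r) (pt p' q' r')
        = Real.sqrt ((p - p') ^ 2 + (q - q') ^ 2 + (r - r') ^ 2) := by
    intro p q r p' q' r'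
    rw [hpt]
    simp only [dist_add_left]
    rw [hf, ← LinearIsometryEquiv.dist_map bb.repr]
    simp only [LinearIsometryEquiv.apply_symm_apply]
    rw [EuclideanSpace.dist_eq, Fin.sum_univ_three]
    simp only [hv3apply, Real.dist_eq]
    congr 1
    norm_num [sq_abs]
    rfl
  have hA : A = pt 0 0 0 := by
    simp [hpt, hv3]
  have hB : B = pt c 0 0 := by
    have : f (v3 c 0 0) = c • u := by
      have : v3 c 0 0 = c • EuclideanSpace.single 0 (1 : ℝ) := by simp [hv3]
      rw [this, hf, map_smul, OrthonormalBasis.repr_symm_single, hbb0]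
    rw [hpt]
    simp only [this, hu, smul_smul]
    rw [mul_inv_cancel₀ hc0, one_smul]
    abel
  -- coordinates of C and D
  set x : ℝ := (b ^ 2 + c ^ 2 - a ^ 2) / (2 * c) with hx
  set y : ℝ := Real.sqrt ((a ^ 2 + b ^ 2 - c ^ 2) / 2) with hy
  set z : ℝ := Real.sqrt ((a ^ 2 + c ^ 2 - b ^ 2) * (b ^ 2 + c ^ 2 - a ^ 2)) / (2 * c)
    with hz
  have hy2 : y ^ 2 = (a ^ 2 + b ^ 2 - c ^ 2) / 2 := by
    rw [hy, Real.sq_sqrt (by linarith)]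
  have hz2 : z ^ 2 = (a ^ 2 + c ^ 2 - b ^ 2) * (b ^ 2 + c ^ 2 - a ^ 2) / (4 * c ^ 2) := by
    rw [hz, div_pow, Real.sq_sqrt (by nlinarith)]
    ring
  refine ⟨pt x y z, pt (c - x) y (-z), ?_, ?_, ?_, ?_, ?_⟩
  · rw [hdist]
    have h1 : (x - (c - x)) ^ 2 + (y - y) ^ 2 + (z - -z) ^ 2 = c ^ 2 := by
      rw [show (x - (c - x)) ^ 2 + (y - y) ^ 2 + (z - -z) ^ 2
          = (2 * x - c) ^ 2 + 4 * z ^ 2 by ring, hz2, hx]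
      field_simp
      ring
    rw [h1, Real.sqrt_sq hc.le]
  · rw [hA, hdist]
    have h1 : (0 - x) ^ 2 + (0 - y) ^ 2 + (0 - z) ^ 2 = b ^ 2 := by
      rw [show (0 - x) ^ 2 + (0 - y) ^ 2 + (0 - z) ^ 2
          = x ^ 2 + y ^ 2 + z ^ 2 by ring, hy2, hz2, hx]
      field_simp
      ring
    rw [h1, Real.sqrt_sq hb.le]
  · rw [hB, hdist]
    have h1 : (c - (c - x)) ^ 2 + (0 - y) ^ 2 + (0 - -z) ^ 2 = b ^ 2 := by
      rw [show (c - (c - x)) ^ 2 + (0 - y) ^ 2 + (0 - -z) ^ 2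
          = x ^ 2 + y ^ 2 + z ^ 2 by ring, hy2, hz2, hx]
      field_simp
      ring
    rw [h1, Real.sqrt_sq hb.le]
  · rw [hA, hdist]
    have h1 : (0 - (c - x)) ^ 2 + (0 - y) ^ 2 + (0 - -z) ^ 2 = a ^ 2 := by
      rw [show (0 - (c - x)) ^ 2 + (0 - y) ^ 2 + (0 - -z) ^ 2
          = (c - x) ^ 2 + y ^ 2 + z ^ 2 by ring, hy2, hz2, hx]
      field_simp
      ring
    rw [h1, Real.sqrt_sq ha.le]
  · rw [hB, hdist]
    have h1 : (c - x) ^ 2 + (0 - y) ^ 2 + (0 - z) ^ 2 = a ^ 2 := by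
      rw [show (c - x) ^ 2 + (0 - y) ^ 2 + (0 - z) ^ 2
          = (c - x) ^ 2 + y ^ 2 + z ^ 2 by ring, hy2, hz2, hx]
      field_simp
      ring
    rw [h1, Real.sqrt_sq ha.le]
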